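/- Let k ≥ 1, λ > 0, and for t ∈ ℝ^k let B = [−λ, λ]^k ⊆ ℝ^k and B + t its translate. Then the Lebesgue measure of the intersection satisfies vol(B ∩ (B + t)) = ∏_{i=1}^{k} max(0, 2λ − |t_i|); consequently, writing μ_λ for the product of k copies of the uniform distribution on [−λ, λ], for every measurable set s ⊆ ℝ^k one has |μ_λ({ε : ε + x ∈ s}) − μ_λ({ε : ε + y ∈ s})| ≤ 1 − ∏_{i=1}^{k} max(0, 1 − |x_i − y_i|/(2λ)) ≤ ‖x − y‖₁/(2λ) for all x, y ∈ ℝ^k. -/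

import Mathlib

open MeasureTheory

/-- The product on `ℝ^k` of `k` copies of the uniform distribution on `[-λ, λ]`. -/
noncomputable def unifPi (k : ℕ) (l : ℝ) : Measure (Fin k → ℝ) :=
  Measure.pi fun _ => (ENNReal.ofReal (2 * l))⁻¹ • volume.restrict (Set.Icc (-l) l)

open Set

lemma icc_len (l a b : ℝ) :
    volume (Icc (-l + a) (l + a) ∩ Icc (-l + b) (l + b)) =
      ENNReal.ofReal (max 0 (2 * l - |a - b|)) := by
  rw [Set.Icc_inter_Icc, Real.volume_Icc, min_add_add_left, max_add_add_left]
  have h1 : l + a ⊓ b - (-l + a ⊔ b) = 2 * l - |a - b| := by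
    have := max_sub_min_eq_abs a b
    rw [abs_sub_comm] at this
    linarith
  rw [h1]
  rcases le_total 0 (2 * l - |a - b|) with h | h
  · rw [max_eq_right h]
  · rw [max_eq_left h, ENNReal.ofReal_of_nonpos h, ENNReal.ofReal_zero]

lemma img_pi {k : ℕ} (l : ℝ) (a : Fin k → ℝ) :
    (fun z => z + a) '' (Set.univ.pi fun _ : Fin k => Icc (-l) l) =
      Set.univ.pi fun i => Icc (-l + a i) (l + a i) := by
  ext z
  constructor
  · rintro ⟨w, hw, rfl⟩ i _
    have := hw i trivial
    simp only [mem_Icc, Pi.add_apply, Pi.sub_apply] at this ⊢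
    constructor <;> [linarith [this.1]; linarith [this.2]]
  · intro hz
    refine ⟨z - a, fun i _ => ?_, by simp⟩
    have := hz i trivial
    simp only [mem_Icc, Pi.add_apply, Pi.sub_apply] at this ⊢
    constructor <;> [linarith [this.1]; linarith [this.2]]

lemma box_overlap {k : ℕ} (l : ℝ) (a b : Fin k → ℝ) :
    volume (((fun z => z + a) '' (Set.univ.pi fun _ : Fin k => Icc (-l) l)) ∩
        ((fun z => z + b) '' (Set.univ.pi fun _ : Fin k => Icc (-l) l))) =
      ENNReal.ofReal (∏ i, max 0 (2 * l - |a i - b i|)) := by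
  rw [img_pi, img_pi, ← Set.pi_inter_distrib, volume_pi_pi]
  rw [ENNReal.ofReal_prod_of_nonneg fun i _ => le_max_left _ _]
  exact Finset.prod_congr rfl fun i _ => icc_len l (a i) (b i)


lemma unifPi_eq {k : ℕ} {l : ℝ} (hl : 0 < l) :
    unifPi k l = (((ENNReal.ofReal (2 * l))⁻¹) ^ k) •
      volume.restrict (Set.univ.pi fun _ : Fin k => Icc (-l) l) := by
  have hfin : ∀ _i : Fin k, IsFiniteMeasure
      ((ENNReal.ofReal (2 * l))⁻¹ • volume.restrict (Set.Icc (-l) l)) := by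
    intro i
    constructor
    rw [Measure.smul_apply, Measure.restrict_apply MeasurableSet.univ, Set.univ_inter,
      Real.volume_Icc, smul_eq_mul]
    exact ENNReal.mul_lt_top (ENNReal.inv_lt_top.2 (ENNReal.ofReal_pos.2 (by linarith)))
      ENNReal.ofReal_lt_top
  have hsf : ∀ _i : Fin k, SigmaFinite
      ((ENNReal.ofReal (2 * l))⁻¹ • volume.restrict (Set.Icc (-l) l)) := by
    intro i
    have := hfin i
    infer_instance
  haveI := hsf
  unfold unifPi
  refine Measure.pi_eq fun s hs => ?_
  rw [Measure.smul_apply, Measure.restrict_apply (MeasurableSet.univ_pi hs),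
    ← Set.pi_inter_distrib, volume_pi_pi, smul_eq_mul]
  simp only [Measure.smul_apply, Measure.restrict_apply (hs _), smul_eq_mul]
  rw [Finset.prod_mul_distrib, Finset.prod_const, Finset.card_univ, Fintype.card_fin]

lemma one_sub_sum_le_prod {k : ℕ} (v : Fin k → ℝ) (s : Finset (Fin k))
    (h0 : ∀ i, 0 ≤ v i) : 1 - ∑ i ∈ s, min (v i) 1 ≤ ∏ i ∈ s, max 0 (1 - v i) := by
  induction s using Finset.cons_induction with
  | empty => simp
  | cons a s ha ih =>
    rw [Finset.prod_cons, Finset.sum_cons]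
    have hma0 : 0 ≤ min (v a) 1 := le_min (h0 a) zero_le_one
    have hma1 : min (v a) 1 ≤ 1 := min_le_right _ _
    have hfa : max 0 (1 - v a) = 1 - min (v a) 1 := by
      rcases le_total (v a) 1 with h | h
      · rw [min_eq_left h, max_eq_right (by linarith)]
      · rw [min_eq_right h, max_eq_left (by linarith)]; ring
    have hS0 : 0 ≤ ∑ i ∈ s, min (v i) 1 :=
      Finset.sum_nonneg fun i _ => le_min (h0 i) zero_le_one
    have hP0 : (0:ℝ) ≤ ∏ i ∈ s, max 0 (1 - v i) :=
      Finset.prod_nonneg fun i _ => le_max_left _ _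
    rw [hfa]
    nlinarith [mul_le_mul_of_nonneg_left ih (by linarith : (0:ℝ) ≤ 1 - min (v a) 1)]

lemma one_sub_prod_le {k : ℕ} {l : ℝ} (hl : 0 < l) (d : Fin k → ℝ) (hd : ∀ i, 0 ≤ d i) :
    1 - ∏ i, max 0 (1 - d i / (2 * l)) ≤ (∑ i, d i) / (2 * l) := by
  have h2l : (0:ℝ) < 2 * l := by linarith
  have := one_sub_sum_le_prod (fun i => d i / (2 * l)) Finset.univ
    (fun i => div_nonneg (hd i) h2l.le)
  have hsum : ∑ i, min (d i / (2 * l)) 1 ≤ (∑ i, d i) / (2 * l) := by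
    rw [Finset.sum_div]
    exact Finset.sum_le_sum fun i _ => min_le_left _ _
  linarith

theorem stmt_11 {k : ℕ} (hk : 1 ≤ k) {l : ℝ} (hl : 0 < l) :
    (∀ t : Fin k → ℝ,
      volume ((Set.univ.pi fun _ : Fin k => Set.Icc (-l) l) ∩
          ((fun z => z + t) '' (Set.univ.pi fun _ : Fin k => Set.Icc (-l) l))) =
        ENNReal.ofReal (∏ i, max 0 (2 * l - |t i|))) ∧
    (∀ s : Set (Fin k → ℝ), MeasurableSet s → ∀ x y : Fin k → ℝ,
      |((unifPi k l) {ε | ε + x ∈ s}).toReal - ((unifPi k l) {ε | ε + y ∈ s}).toReal| ≤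
          1 - ∏ i, max 0 (1 - |x i - y i| / (2 * l)) ∧
        1 - ∏ i, max 0 (1 - |x i - y i| / (2 * l)) ≤ (∑ i, |x i - y i|) / (2 * l)) := by
  have h2l : (0:ℝ) < 2 * l := by linarith
  constructor
  · intro t
    have h := box_overlap l (0 : Fin k → ℝ) t
    simpa using h
  · intro s hs x y
    set B : Set (Fin k → ℝ) := Set.univ.pi fun _ : Fin k => Set.Icc (-l) l with hBdef
    set d : Fin k → ℝ := fun i => |x i - y i| with hddef
    have hd0 : ∀ i, 0 ≤ d i := fun i => abs_nonneg _
    set P : ℝ := ∏ i, max 0 (1 - d i / (2 * l)) with hPdef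
    refine ⟨?_, one_sub_prod_le hl d hd0⟩
    set Bx : Set (Fin k → ℝ) := (fun z => z + x) '' B with hBx
    set By : Set (Fin k → ℝ) := (fun z => z + y) '' B with hBy
    set C : Set (Fin k → ℝ) := Bx ∩ By with hC
    set r : ℝ := (2 * l) ^ k with hrdef
    have hr : (0:ℝ) < r := pow_pos h2l k
    -- volume of translated boxes
    have hvol_img : ∀ a : Fin k → ℝ,
        volume ((fun z => z + a) '' B) = ENNReal.ofReal r := by
      intro a
      rw [hBdef, img_pi, volume_pi_pi]
      have h1 : ∀ i : Fin k, volume (Set.Icc (-l + a i) (l + a i)) = ENNReal.ofReal (2 * l) := by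
        intro i; rw [Real.volume_Icc]; congr 1; ring
      rw [Finset.prod_congr rfl fun i _ => h1 i, Finset.prod_const, Finset.card_univ,
        Fintype.card_fin, ← ENNReal.ofReal_pow h2l.le]
    have hvolBx : volume Bx = ENNReal.ofReal r := hvol_img x
    have hvolBy : volume By = ENNReal.ofReal r := hvol_img y
    have hvolC : volume C = ENNReal.ofReal (∏ i, max 0 (2 * l - d i)) := box_overlap l x y
    -- measurability
    have hBxm : MeasurableSet Bx := by
      rw [hBx, hBdef, img_pi]; exact MeasurableSet.univ_pi fun _ => measurableSet_Icc
    have hBym : MeasurableSet By := by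
      rw [hBy, hBdef, img_pi]; exact MeasurableSet.univ_pi fun _ => measurableSet_Icc
    have hCm : MeasurableSet C := hBxm.inter hBym
    -- the measure formula
    have hμ : ∀ a : Fin k → ℝ, unifPi k l {ε | ε + a ∈ s} =
        ((ENNReal.ofReal (2 * l))⁻¹) ^ k * volume (s ∩ ((fun z => z + a) '' B)) := by
      intro a
      have hpre : MeasurableSet {ε : Fin k → ℝ | ε + a ∈ s} :=
        hs.preimage (measurable_add_const a)
      rw [unifPi_eq hl, Measure.smul_apply, Measure.restrict_apply hpre, smul_eq_mul]
      congr 1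
      have hset : {ε : Fin k → ℝ | ε + a ∈ s} ∩ B =
          (fun z => z + a) ⁻¹' (s ∩ ((fun z => z + a) '' B)) := by
        ext ε
        simp only [mem_inter_iff, mem_preimage, mem_setOf_eq, mem_image]
        constructor
        · rintro ⟨h1, h2⟩; exact ⟨h1, ε, h2, rfl⟩
        · rintro ⟨h1, w, hw, hwe⟩
          have hw' : w = ε := by
            have := congrArg (fun z => z - a) hwe
            simpa using this
          exact ⟨h1, hw' ▸ hw⟩
      rw [hset, measure_preimage_add_right]
    -- finiteness
    have hfinBx : volume Bx ≠ ⊤ := by rw [hvolBx]; exact ENNReal.ofReal_ne_top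
    have hfinBy : volume By ≠ ⊤ := by rw [hvolBy]; exact ENNReal.ofReal_ne_top
    have hfinC : volume C ≠ ⊤ := by rw [hvolC]; exact ENNReal.ofReal_ne_top
    have hfinsx : volume (s ∩ Bx) ≠ ⊤ :=
      (lt_of_le_of_lt (measure_mono inter_subset_right) hfinBx.lt_top).ne
    have hfinsy : volume (s ∩ By) ≠ ⊤ :=
      (lt_of_le_of_lt (measure_mono inter_subset_right) hfinBy.lt_top).ne
    have hfinsC : volume (s ∩ C) ≠ ⊤ :=
      (lt_of_le_of_lt (measure_mono inter_subset_right) hfinC.lt_top).ne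
    set a : ℝ := (volume (s ∩ Bx)).toReal with hadef
    set b : ℝ := (volume (s ∩ By)).toReal with hbdef
    set m : ℝ := (volume (s ∩ C)).toReal with hmdef
    set vC : ℝ := ∏ i, max 0 (2 * l - d i) with hvCdef
    have hvC0 : 0 ≤ vC := Finset.prod_nonneg fun i _ => le_max_left _ _
    -- vC = r * P
    have hvCP : vC = r * P := by
      rw [hvCdef, hPdef, hrdef,
        show (2*l)^k = ∏ _i : Fin k, (2*l) by
          rw [Finset.prod_const, Finset.card_univ, Fintype.card_fin],
        ← Finset.prod_mul_distrib]
      refine Finset.prod_congr rfl fun i _ => ?_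
      rw [mul_max_of_nonneg _ _ h2l.le, mul_zero]
      congr 1
      field_simp
    -- key bounds
    have hmlea : m ≤ a := ENNReal.toReal_mono hfinsx
      (measure_mono (inter_subset_inter subset_rfl inter_subset_left))
    have hmleb : m ≤ b := ENNReal.toReal_mono hfinsy
      (measure_mono (inter_subset_inter subset_rfl inter_subset_right))
    have hdiffvol : ∀ (Z : Set (Fin k → ℝ)), volume Z = ENNReal.ofReal r → C ⊆ Z →
        (volume (Z \ C)).toReal = r - vC := by
      intro Z hZ hsub
      rw [measure_diff hsub hCm.nullMeasurableSet hfinC, hZ, hvolC,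
        ENNReal.toReal_sub_of_le (by rw [← hZ, ← hvolC]; exact measure_mono hsub) (by simp),
        ENNReal.toReal_ofReal hr.le, ENNReal.toReal_ofReal hvC0]
    have hub : ∀ (Z : Set (Fin k → ℝ)), volume Z = ENNReal.ofReal r → C ⊆ Z →
        volume (s ∩ Z) ≠ ⊤ →
        (volume (s ∩ Z)).toReal ≤ m + (r - vC) := by
      intro Z hZ hsub hfin
      have hsplit : s ∩ Z ⊆ (s ∩ C) ∪ (Z \ C) := by
        rintro z ⟨hz1, hz2⟩
        by_cases hzc : z ∈ C
        · exact Or.inl ⟨hz1, hzc⟩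
        · exact Or.inr ⟨hz2, hzc⟩
      have h1 : volume (s ∩ Z) ≤ volume (s ∩ C) + volume (Z \ C) :=
        (measure_mono hsplit).trans (measure_union_le _ _)
      have hfin2 : volume (s ∩ C) + volume (Z \ C) ≠ ⊤ := by
        refine ENNReal.add_ne_top.2 ⟨hfinsC, ?_⟩
        exact ((measure_mono diff_subset).trans_lt (by rw [hZ]; exact ENNReal.ofReal_lt_top)).ne
      have := ENNReal.toReal_mono hfin2 h1
      rwa [ENNReal.toReal_add hfinsC (by
        exact ((measure_mono diff_subset).trans_lt (by rw [hZ]; exact ENNReal.ofReal_lt_top)).ne),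
        hdiffvol Z hZ hsub] at this
    have haub : a ≤ m + (r - vC) := hub Bx hvolBx inter_subset_left hfinsx
    have hbub : b ≤ m + (r - vC) := hub By hvolBy inter_subset_right hfinsy
    -- the normalizing constant
    have hcr : (((ENNReal.ofReal (2 * l))⁻¹) ^ k).toReal = r⁻¹ := by
      rw [ENNReal.toReal_pow, ENNReal.toReal_inv, ENNReal.toReal_ofReal h2l.le, hrdef,
        ← inv_pow]
    have hμx : ((unifPi k l) {ε | ε + x ∈ s}).toReal = r⁻¹ * a := by
      rw [hμ x, ENNReal.toReal_mul, hcr, ← hBx, ← hadef]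
    have hμy : ((unifPi k l) {ε | ε + y ∈ s}).toReal = r⁻¹ * b := by
      rw [hμ y, ENNReal.toReal_mul, hcr, ← hBy, ← hbdef]
    rw [hμx, hμy]
    have habs : |a - b| ≤ r - vC := abs_sub_le_iff.2 ⟨by linarith, by linarith⟩
    have : |r⁻¹ * a - r⁻¹ * b| = r⁻¹ * |a - b| := by
      rw [← mul_sub, abs_mul, abs_of_nonneg (inv_nonneg.2 hr.le)]
    rw [this]
    have h2 : r⁻¹ * |a - b| ≤ r⁻¹ * (r - vC) :=
      mul_le_mul_of_nonneg_left habs (inv_nonneg.2 hr.le)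
    have h3 : r⁻¹ * (r - vC) = 1 - P := by
      rw [hvCP]; field_simp
    linarith
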